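/- Let N = N(Q_n, m, r) be a quasi Q_n-filiform Lie algebra which is indecomposable (N cannot be decomposed into a direct sum of two nonzero ideals). Then for every derivation δ of N, λ_1 = λ_2 = ... = λ_m, where λ_s = (n-2)·c^{s0}_{s0} + 2·c^{s1}_{s1}. -/

import Mathlib

open Finset

/-- A quasi `Qₙ`-filiform Lie algebra `N = N(Qₙ, m, r)`: a finite-dimensional complex
nilpotent Lie algebra which is the sum of `m` pairwise commuting subalgebras, each
isomorphic to the filiform Lie algebra `Qₙ` with basis `e i 0, …, e i n` satisfying the
`Qₙ` bracket relations, and such that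
`{e 1 0, …, e 1 (n-1), …, e m 0, …, e m (n-1), e 1 n, …, e r n}` is a basis of `N`,
where `r = dim c^{n-1} N`. -/
structure QuasiQnFiliform (n m r : ℕ) (N : Type*) [LieRing N] [LieAlgebra ℂ N] : Type _ where
  /-- the distinguished vectors `e_{ij}`, for `1 ≤ i ≤ m`, `0 ≤ j ≤ n` -/
  e : ℕ → ℕ → N
  /-- `N` is nilpotent -/
  nilpotent : LieRing.IsNilpotent N
  /-- `N` is finite-dimensional -/
  findim : FiniteDimensional ℂ N
  /-- `[e_{i0}, e_{ij}] = e_{i,j+1}` for `1 ≤ j ≤ n - 2` -/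
  bracket_e0 : ∀ i j, 1 ≤ i → i ≤ m → 1 ≤ j → j ≤ n - 2 → ⁅e i 0, e i j⁆ = e i (j + 1)
  /-- `[e_{i0}, e_{i,n-1}] = 0` -/
  bracket_e0_top : ∀ i, 1 ≤ i → i ≤ m → ⁅e i 0, e i (n - 1)⁆ = 0
  /-- `[e_{i0}, e_{in}] = 0` -/
  bracket_e0_n : ∀ i, 1 ≤ i → i ≤ m → ⁅e i 0, e i n⁆ = 0
  /-- `[e_{ij}, e_{i,n-j}] = (-1)^j e_{in}` for `1 ≤ j ≤ n - 1` -/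
  bracket_pair : ∀ i j, 1 ≤ i → i ≤ m → 1 ≤ j → j ≤ n - 1 →
    ⁅e i j, e i (n - j)⁆ = ((-1 : ℂ)) ^ j • e i n
  /-- all remaining brackets inside a component vanish -/
  bracket_zero : ∀ i j k, 1 ≤ i → i ≤ m → 1 ≤ j → j ≤ n → 1 ≤ k → k ≤ n → j + k ≠ n →
    ⁅e i j, e i k⁆ = 0
  /-- distinct components commute: `[N_i, N_{i'}] = 0` -/
  bracket_comm : ∀ i i' j j', 1 ≤ i → i ≤ m → 1 ≤ i' → i' ≤ m → i ≠ i' → j ≤ n → j' ≤ n →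
    ⁅e i j, e i' j'⁆ = 0
  /-- `{e_{i0}, …, e_{in}}` is linearly independent (each `Nᵢ ≅ Qₙ` has it as a basis) -/
  indep_comp : ∀ i, 1 ≤ i → i ≤ m → LinearIndependent ℂ (fun j : Fin (n + 1) => e i (j : ℕ))
  /-- the distinguished family is linearly independent … -/
  basis_indep : LinearIndependent ℂ
    (Sum.elim (fun p : Fin m × Fin n => e ((p.1 : ℕ) + 1) (p.2 : ℕ))
      (fun t : Fin r => e ((t : ℕ) + 1) n))
  /-- … and spans `N`, i.e. it is a basis of `N` (in particular `N = N₁ + ⋯ + N_m`) -/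
  basis_span : Submodule.span ℂ (Set.range
    (Sum.elim (fun p : Fin m × Fin n => e ((p.1 : ℕ) + 1) (p.2 : ℕ))
      (fun t : Fin r => e ((t : ℕ) + 1) n))) = ⊤
  /-- `r = dim c^{n-1} N` -/
  rank_lcs : Module.finrank ℂ (LieModule.lowerCentralSeries ℂ N N (n - 1)) = r

section aux
variable {N : Type*} [LieRing N] [LieAlgebra ℂ N]

private lemma sum_lie' {ι : Type*} (s : Finset ι) (f : ι → N) (y : N) :
    ⁅∑ i ∈ s, f i, y⁆ = ∑ i ∈ s, ⁅f i, y⁆ :=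
  map_sum (AddMonoidHom.mk' (fun x => ⁅x, y⁆) (fun a b => add_lie a b y)) f s

private lemma lie_mem_of_forall_mem {S : Set N} {P : Submodule ℂ N} {x : N}
    (h : ∀ y ∈ S, ⁅x, y⁆ ∈ P) : ∀ v ∈ Submodule.span ℂ S, ⁅x, v⁆ ∈ P := by
  intro v hv
  induction hv using Submodule.span_induction with
  | mem y hy => exact h y hy
  | zero => rw [lie_zero]; exact P.zero_mem
  | add y z _ _ hy hz => rw [lie_add]; exact P.add_mem hy hz
  | smul t y _ hy => rw [lie_smul]; exact P.smul_mem t hy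

private lemma lie_mem_of_forall_mem' {S : Set N} {P : Submodule ℂ N} {x : N}
    (h : ∀ y ∈ S, ⁅y, x⁆ ∈ P) : ∀ v ∈ Submodule.span ℂ S, ⁅v, x⁆ ∈ P := by
  intro v hv
  induction hv using Submodule.span_induction with
  | mem y hy => exact h y hy
  | zero => rw [zero_lie]; exact P.zero_mem
  | add y z _ _ hy hz => rw [add_lie]; exact P.add_mem hy hz
  | smul t y _ hy => rw [smul_lie]; exact P.smul_mem t hy

end aux

open Finset in
/-- **Lemma 2.1.** Let `N = N(Qₙ, m, r)` be an indecomposable quasi `Qₙ`-filiform Lie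
algebra (not a direct sum of two nonzero ideals) and let `δ` be a derivation of `N` with
`δ e_{st} = Σ_{i=1}^m Σ_{j=0}^{n-1} c^{st}_{ij} e_{ij} + Σ_{i=1}^r c^{st}_{in} e_{in}`
for `t = 0, 1`.  Then `λ₁ = λ₂ = ⋯ = λ_m`, where
`λ_s = (n-2) c^{s0}_{s0} + 2 c^{s1}_{s1}`. -/
theorem derivation_lambda_eq_of_indecomposable
    (n d m r : ℕ) (hn : n = 2 * d + 1) (hd : 2 ≤ d)
    (hm : 1 ≤ m) (hr : 1 ≤ r) (hrm : r ≤ m)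
    (N : Type*) [LieRing N] [LieAlgebra ℂ N] (Q : QuasiQnFiliform n m r N)
    (hind : ¬ ∃ I J : LieIdeal ℂ N, I ≠ ⊥ ∧ J ≠ ⊥ ∧ I ⊓ J = ⊥ ∧ I ⊔ J = ⊤)
    (δ : LieDerivation ℂ N N) (c : ℕ → ℕ → ℕ → ℕ → ℂ)
    (hc : ∀ s t, 1 ≤ s → s ≤ m → t ≤ 1 →
      δ (Q.e s t) = ∑ i ∈ Icc 1 m, ∑ j ∈ range n, c s t i j • Q.e i j
        + ∑ i ∈ Icc 1 r, c s t i n • Q.e i n) :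
    ∀ s p, 1 ≤ s → s ≤ m → 1 ≤ p → p ≤ m →
      ((n - 2 : ℕ) : ℂ) * c s 0 s 0 + 2 * c s 1 s 1
        = ((n - 2 : ℕ) : ℂ) * c p 0 p 0 + 2 * c p 1 p 1 := by
  classical
  have hn5 : 5 ≤ n := by omega
  haveI := Q.findim
  set F := Sum.elim (fun p : Fin m × Fin n => Q.e ((p.1 : ℕ) + 1) (p.2 : ℕ))
      (fun t : Fin r => Q.e ((t : ℕ) + 1) n) with hF
  have hspan : Submodule.span ℂ (Set.range F) = ⊤ := Q.basis_span
  -- every `e i n` is central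
  have hcent : ∀ i, 1 ≤ i → i ≤ m → ∀ x : N, ⁅x, Q.e i n⁆ = 0 := by
    intro i hi1 him x
    have hx : x ∈ Submodule.span ℂ (Set.range F) := by rw [hspan]; exact Submodule.mem_top
    have h0 : ∀ y ∈ Set.range F, ⁅y, Q.e i n⁆ ∈ (⊥ : Submodule ℂ N) := by
      rintro y ⟨idx, rfl⟩
      rw [Submodule.mem_bot]
      cases idx with
      | inl q =>
        obtain ⟨⟨av, hav⟩, ⟨bv, hbv⟩⟩ := q
        show ⁅Q.e (av + 1) bv, Q.e i n⁆ = 0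
        by_cases hai : av + 1 = i
        · rw [hai]
          rcases Nat.eq_zero_or_pos bv with hb | hb
          · rw [hb]; exact Q.bracket_e0_n i hi1 him
          · exact Q.bracket_zero i bv n hi1 him hb (by omega) (by omega) le_rfl (by omega)
        · exact Q.bracket_comm (av + 1) i bv n (by omega) (by omega) hi1 him hai (by omega) le_rfl
      | inr t =>
        obtain ⟨tv, htv⟩ := t
        show ⁅Q.e (tv + 1) n, Q.e i n⁆ = 0
        by_cases hti : tv + 1 = i
        · rw [hti]
          exact Q.bracket_zero i n n hi1 him (by omega) le_rfl (by omega) le_rfl (by omega)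
        · exact Q.bracket_comm (tv + 1) i n n (by omega) (by omega) hi1 him hti le_rfl le_rfl
    have := lie_mem_of_forall_mem' h0 x hx
    rwa [Submodule.mem_bot] at this
  have hcent' : ∀ i, 1 ≤ i → i ≤ m → ∀ x : N, ⁅Q.e i n, x⁆ = 0 := by
    intro i hi1 him x
    rw [← neg_neg ⁅Q.e i n, x⁆, ← lie_skew, hcent i hi1 him x]; simp
  -- the eigenvalue property
  have heig : ∀ s, 1 ≤ s → s ≤ m →
      δ (Q.e s n) = (((n - 2 : ℕ) : ℂ) * c s 0 s 0 + 2 * c s 1 s 1) • Q.e s n := by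
    intro s hs1 hsm
    set a := c s 0 s 0 with ha
    set b := c s 1 s 1 with hb
    set Z : Submodule ℂ N :=
      Submodule.span ℂ {x : N | ∃ i, 1 ≤ i ∧ i ≤ m ∧ x = Q.e i n} with hZ
    set W : ℕ → Submodule ℂ N := fun j => Submodule.span ℂ
      ({x : N | ∃ k, j + 1 ≤ k ∧ k ≤ n - 1 ∧ x = Q.e s k}
        ∪ {x : N | ∃ i, 1 ≤ i ∧ i ≤ m ∧ x = Q.e i n}) with hW
    have hZW : ∀ j, Z ≤ W j := fun j => Submodule.span_mono Set.subset_union_right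
    have hBR : ∀ j i k, 1 ≤ j → j ≤ n - 1 → 1 ≤ i → i ≤ m → k ≤ n - 1 →
        (i ≠ s ∨ k ≠ 0) → ⁅Q.e i k, Q.e s j⁆ ∈ Z := by
      intro j i k hj1 hjn hi1 him hk hik
      by_cases his : i = s
      · subst his
        have hk0 : 1 ≤ k := by
          rcases hik with h | h
          · exact absurd rfl h
          · omega
        by_cases hkj : k + j = n
        · have hj' : j = n - k := by omega
          rw [hj', Q.bracket_pair i k hi1 him hk0 (by omega)]
          exact Submodule.smul_mem _ _ (Submodule.subset_span ⟨i, hi1, him, rfl⟩)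
        · rw [Q.bracket_zero i k j hi1 him hk0 (by omega) hj1 (by omega) hkj]
          exact Z.zero_mem
      · rw [Q.bracket_comm i s k j hi1 him hs1 hsm his (by omega) (by omega)]
        exact Z.zero_mem
    have H1 : ∀ t, t ≤ 1 → ∀ (y : N) (P : Submodule ℂ N),
        (∀ i k, 1 ≤ i → i ≤ m → k < n → (i ≠ s ∨ k ≠ t) → ⁅Q.e i k, y⁆ ∈ P) →
        (∀ i, 1 ≤ i → i ≤ r → ⁅Q.e i n, y⁆ = 0) →
        ⁅δ (Q.e s t), y⁆ - c s t s t • ⁅Q.e s t, y⁆ ∈ P := by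
      intro t ht y P hgen hcen
      rw [hc s t hs1 hsm ht, add_lie]
      simp only [sum_lie', smul_lie]
      rw [show (∑ i ∈ Icc 1 r, c s t i n • ⁅Q.e i n, y⁆) = 0 from
        Finset.sum_eq_zero fun i hi => by
          rw [hcen i (mem_Icc.mp hi).1 (mem_Icc.mp hi).2, smul_zero], add_zero]
      rw [← Finset.add_sum_erase (Icc 1 m) _ (mem_Icc.mpr ⟨hs1, hsm⟩)]
      rw [← Finset.add_sum_erase (range n) _ (mem_range.mpr (by omega : t < n))]
      have h2 : ((c s t s t • ⁅Q.e s t, y⁆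
            + ∑ j ∈ (range n).erase t, c s t s j • ⁅Q.e s j, y⁆)
            + ∑ i ∈ (Icc 1 m).erase s, ∑ j ∈ range n, c s t i j • ⁅Q.e i j, y⁆)
            - c s t s t • ⁅Q.e s t, y⁆
          = (∑ j ∈ (range n).erase t, c s t s j • ⁅Q.e s j, y⁆)
            + ∑ i ∈ (Icc 1 m).erase s, ∑ j ∈ range n, c s t i j • ⁅Q.e i j, y⁆ := by
        abel
      rw [h2]
      refine P.add_mem (Submodule.sum_mem _ fun j hj => ?_)
        (Submodule.sum_mem _ fun i hi => Submodule.sum_mem _ fun j hj => ?_)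
      · obtain ⟨hjt, hjn⟩ := Finset.mem_erase.mp hj
        exact P.smul_mem _ (hgen s j hs1 hsm (mem_range.mp hjn) (Or.inr hjt))
      · obtain ⟨his, him⟩ := Finset.mem_erase.mp hi
        exact P.smul_mem _
          (hgen i j (mem_Icc.mp him).1 (mem_Icc.mp him).2 (mem_range.mp hj) (Or.inl his))
    -- the inductive computation of δ e_{sj}
    have hInd : ∀ j, 2 ≤ j → j ≤ n - 1 → ∃ v ∈ W j,
        δ (Q.e s j) = (((j - 1 : ℕ) : ℂ) * a + b) • Q.e s j + v := by
      intro j hj2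
      induction j, hj2 using Nat.le_induction with
      | base =>
        intro _
        have hE : ⁅Q.e s 0, Q.e s 1⁆ = Q.e s 2 := Q.bracket_e0 s 1 hs1 hsm le_rfl (by omega)
        have h1 : ⁅δ (Q.e s 0), Q.e s 1⁆ - a • ⁅Q.e s 0, Q.e s 1⁆ ∈ Z := by
          refine H1 0 (by omega) (Q.e s 1) Z (fun i k hi1 him hk hik => ?_)
            (fun i hi1 hir => hcent' i hi1 (le_trans hir hrm) _)
          exact hBR 1 i k le_rfl (by omega) hi1 him (by omega) hik
        have h2 : ⁅δ (Q.e s 1), Q.e s 0⁆ - b • ⁅Q.e s 1, Q.e s 0⁆ ∈ W 2 := by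
          refine H1 1 le_rfl (Q.e s 0) (W 2) (fun i k hi1 him hk hik => ?_)
            (fun i hi1 hir => hcent' i hi1 (le_trans hir hrm) _)
          by_cases his : i = s
          · subst his
            rcases Nat.eq_zero_or_pos k with hk0 | hk0
            · rw [hk0, lie_self]; exact (W 2).zero_mem
            · have hk2 : 2 ≤ k := by
                rcases hik with h | h
                · exact absurd rfl h
                · omega
              by_cases hkn : k ≤ n - 2
              · rw [show ⁅Q.e i k, Q.e i 0⁆ = -⁅Q.e i 0, Q.e i k⁆ from by rw [← lie_skew],
                  Q.bracket_e0 i k hi1 him (by omega) hkn]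
                exact (W 2).neg_mem (Submodule.subset_span (Or.inl ⟨k + 1, by omega, by omega, rfl⟩))
              · have hkn1 : k = n - 1 := by omega
                rw [show ⁅Q.e i k, Q.e i 0⁆ = -⁅Q.e i 0, Q.e i k⁆ from by rw [← lie_skew],
                  hkn1, Q.bracket_e0_top i hi1 him, neg_zero]
                exact (W 2).zero_mem
          · rw [Q.bracket_comm i s k 0 hi1 him hs1 hsm his (by omega) (by omega)]
            exact (W 2).zero_mem
        refine ⟨-(⁅δ (Q.e s 1), Q.e s 0⁆ - b • ⁅Q.e s 1, Q.e s 0⁆)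
            + (⁅δ (Q.e s 0), Q.e s 1⁆ - a • ⁅Q.e s 0, Q.e s 1⁆),
          add_mem ((W 2).neg_mem h2) (hZW 2 h1), ?_⟩
        rw [← hE, LieDerivation.apply_lie_eq_add]
        rw [show ⁅δ (Q.e s 1), Q.e s 0⁆ = -⁅Q.e s 0, δ (Q.e s 1)⁆ from by rw [← lie_skew]]
        rw [show ⁅Q.e s 1, Q.e s 0⁆ = -⁅Q.e s 0, Q.e s 1⁆ from by rw [← lie_skew]]
        rw [show (((2 - 1 : ℕ) : ℂ) * a + b) = a + b from by norm_num]
        module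
      | succ j hj2' ih =>
        intro hjn
        obtain ⟨v, hvW, hv⟩ := ih (by omega)
        have hE : ⁅Q.e s 0, Q.e s j⁆ = Q.e s (j + 1) :=
          Q.bracket_e0 s j hs1 hsm (by omega) (by omega)
        have h1 : ⁅δ (Q.e s 0), Q.e s j⁆ - a • ⁅Q.e s 0, Q.e s j⁆ ∈ Z := by
          refine H1 0 (by omega) (Q.e s j) Z (fun i k hi1 him hk hik => ?_)
            (fun i hi1 hir => hcent' i hi1 (le_trans hir hrm) _)
          exact hBR j i k (by omega) (by omega) hi1 him (by omega) hik
        have h2 : ⁅Q.e s 0, v⁆ ∈ W (j + 1) := by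
          refine lie_mem_of_forall_mem ?_ v hvW
          rintro y (⟨k, hk1, hk2, rfl⟩ | ⟨i, hi1, him, rfl⟩)
          · by_cases hkn : k ≤ n - 2
            · rw [Q.bracket_e0 s k hs1 hsm (by omega) hkn]
              exact Submodule.subset_span (Or.inl ⟨k + 1, by omega, by omega, rfl⟩)
            · have hkn1 : k = n - 1 := by omega
              rw [hkn1, Q.bracket_e0_top s hs1 hsm]; exact (W (j + 1)).zero_mem
          · rw [hcent i hi1 him _]; exact (W (j + 1)).zero_mem
        refine ⟨⁅Q.e s 0, v⁆ + (⁅δ (Q.e s 0), Q.e s j⁆ - a • ⁅Q.e s 0, Q.e s j⁆),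
          add_mem h2 (hZW _ h1), ?_⟩
        have hA : (((j + 1 - 1 : ℕ) : ℂ) * a + b) = ((((j - 1 : ℕ) : ℂ) * a + b) + a) := by
          rw [Nat.add_sub_cancel, Nat.cast_sub (by omega : 1 ≤ j)]
          push_cast; ring
        rw [← hE, LieDerivation.apply_lie_eq_add, hv, lie_add, lie_smul, hA]
        module
    -- final step
    have hpair : ⁅Q.e s 1, Q.e s (n - 1)⁆ = -Q.e s n := by
      have h := Q.bracket_pair s 1 hs1 hsm le_rfl (by omega)
      simpa using h
    obtain ⟨v, hvW, hv⟩ := hInd (n - 1) (by omega) le_rfl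
    have hv0 : ⁅Q.e s 1, v⁆ = 0 := by
      have h : ⁅Q.e s 1, v⁆ ∈ (⊥ : Submodule ℂ N) := by
        refine lie_mem_of_forall_mem ?_ v hvW
        rintro y (⟨k, hk1, hk2, rfl⟩ | ⟨i, hi1, him, rfl⟩)
        · omega
        · rw [hcent i hi1 him _]; exact Submodule.zero_mem _
      rwa [Submodule.mem_bot] at h
    have h1 : ⁅δ (Q.e s 1), Q.e s (n - 1)⁆ = b • ⁅Q.e s 1, Q.e s (n - 1)⁆ := by
      have h : ⁅δ (Q.e s 1), Q.e s (n - 1)⁆ - b • ⁅Q.e s 1, Q.e s (n - 1)⁆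
          ∈ (⊥ : Submodule ℂ N) := by
        refine H1 1 le_rfl (Q.e s (n - 1)) ⊥ (fun i k hi1 him hk hik => ?_)
          (fun i hi1 hir => hcent' i hi1 (le_trans hir hrm) _)
        rw [Submodule.mem_bot]
        by_cases his : i = s
        · subst his
          rcases Nat.eq_zero_or_pos k with hk0 | hk0
          · rw [hk0]; exact Q.bracket_e0_top i hi1 him
          · have hk2 : 2 ≤ k := by
              rcases hik with h' | h'
              · exact absurd rfl h'
              · omega
            exact Q.bracket_zero i k (n - 1) hi1 him hk0 (by omega) (by omega) (by omega)
              (by omega)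
        · exact Q.bracket_comm i s k (n - 1) hi1 him hs1 hsm his (by omega) (by omega)
      rwa [Submodule.mem_bot, sub_eq_zero] at h
    have hmain : δ ⁅Q.e s 1, Q.e s (n - 1)⁆
        = (((n - 2 : ℕ) : ℂ) * a + 2 * b) • ⁅Q.e s 1, Q.e s (n - 1)⁆ := by
      rw [LieDerivation.apply_lie_eq_add, hv, lie_add, lie_smul, hv0, add_zero, h1]
      rw [show (n - 1 - 1 : ℕ) = n - 2 from by omega, ← add_smul]
      congr 1
      ring
    have hesn : Q.e s n = -⁅Q.e s 1, Q.e s (n - 1)⁆ := by rw [hpair, neg_neg]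
    rw [hesn, map_neg, hmain, smul_neg]
  -- each e s j lies deep in the lower central series
  have hLCSmem : ∀ s, 1 ≤ s → s ≤ m →
      Q.e s n ∈ LieModule.lowerCentralSeries ℂ N N (n - 1) := by
    intro s hs1 hsm
    have hj : ∀ j, 1 ≤ j → j ≤ n - 1 →
        Q.e s j ∈ LieModule.lowerCentralSeries ℂ N N (j - 1) := by
      intro j hj1
      induction j, hj1 using Nat.le_induction with
      | base =>
        intro _
        exact LieSubmodule.mem_top _
      | succ j hj1' ih =>
        intro hjn
        have h1 := ih (by omega)
        have hE : ⁅Q.e s 0, Q.e s j⁆ = Q.e s (j + 1) :=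
          Q.bracket_e0 s j hs1 hsm (by omega) (by omega)
        have h2 : Q.e s (j + 1) ∈ LieModule.lowerCentralSeries ℂ N N ((j - 1) + 1) := by
          rw [LieModule.lowerCentralSeries_succ, ← hE]
          exact LieSubmodule.lie_mem_lie (LieSubmodule.mem_top _) h1
        rwa [show (j - 1) + 1 = (j + 1) - 1 from by omega] at h2
    have h1 : Q.e s (n - 1) ∈ LieModule.lowerCentralSeries ℂ N N (n - 2) := by
      have := hj (n - 1) (by omega) le_rfl
      rwa [show n - 1 - 1 = n - 2 from by omega] at this
    have hpair : ⁅Q.e s 1, Q.e s (n - 1)⁆ = -Q.e s n := by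
      have h := Q.bracket_pair s 1 hs1 hsm le_rfl (by omega)
      simpa using h
    have h2 : ⁅Q.e s 1, Q.e s (n - 1)⁆ ∈ LieModule.lowerCentralSeries ℂ N N ((n - 2) + 1) := by
      rw [LieModule.lowerCentralSeries_succ]
      exact LieSubmodule.lie_mem_lie (LieSubmodule.mem_top _) h1
    rw [hpair, show (n - 2) + 1 = n - 1 from by omega] at h2
    simpa using neg_mem h2
  -- `span {e (t+1) n | t < r}` equals the (n-1)-st term of the lower central series
  have indep_r : LinearIndependent ℂ (fun t : Fin r => Q.e ((t : ℕ) + 1) n) := by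
    have h := Q.basis_indep.comp Sum.inr Sum.inr_injective
    exact h
  have hVspan : Submodule.span ℂ (Set.range fun t : Fin r => Q.e ((t : ℕ) + 1) n)
      = (LieModule.lowerCentralSeries ℂ N N (n - 1)).toSubmodule := by
    apply Submodule.eq_of_le_of_finrank_le
    · rw [Submodule.span_le]
      rintro x ⟨t, rfl⟩
      exact hLCSmem ((t : ℕ) + 1) (by omega) (by have := t.isLt; omega)
    · rw [finrank_span_eq_card indep_r, Fintype.card_fin]
      exact Q.rank_lcs.le
  intro s p hs1 hsm hp1 hpm
  set lam : ℕ → ℂ := fun i => ((n - 2 : ℕ) : ℂ) * c i 0 i 0 + 2 * c i 1 i 1 with hlam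
  show lam s = lam p
  -- decomposition of each e i n over the basis vectors e (t+1) n, with matching eigenvalues
  have hmu : ∀ i, 1 ≤ i → i ≤ m → ∃ μ : Fin r → ℂ,
      (∑ t : Fin r, μ t • Q.e ((t : ℕ) + 1) n) = Q.e i n ∧
      ∀ t : Fin r, μ t ≠ 0 → lam ((t : ℕ) + 1) = lam i := by
    intro i hi1 him
    have hmem : Q.e i n ∈ Submodule.span ℂ (Set.range fun t : Fin r => Q.e ((t : ℕ) + 1) n) := by
      rw [hVspan]
      exact hLCSmem i hi1 him
    obtain ⟨μ, hμ⟩ := (Submodule.mem_span_range_iff_exists_fun ℂ).mp hmem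
    refine ⟨μ, hμ, ?_⟩
    have hδ : ∑ t : Fin r, (μ t * lam ((t : ℕ) + 1)) • Q.e ((t : ℕ) + 1) n
        = lam i • Q.e i n := by
      calc ∑ t : Fin r, (μ t * lam ((t : ℕ) + 1)) • Q.e ((t : ℕ) + 1) n
          = δ (∑ t : Fin r, μ t • Q.e ((t : ℕ) + 1) n) := by
            rw [map_sum]
            refine Finset.sum_congr rfl fun t _ => ?_
            rw [map_smul, heig ((t : ℕ) + 1) (by omega) (by have := t.isLt; omega), smul_smul]
        _ = δ (Q.e i n) := by rw [hμ]
        _ = lam i • Q.e i n := heig i hi1 him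
    have h0 : ∑ t : Fin r, (μ t * lam ((t : ℕ) + 1) - lam i * μ t) • Q.e ((t : ℕ) + 1) n
        = 0 := by
      simp only [sub_smul]
      rw [Finset.sum_sub_distrib, hδ]
      rw [sub_eq_zero, ← hμ, Finset.smul_sum]
      exact Finset.sum_congr rfl fun t _ => (smul_smul _ _ _)
    intro t hμt
    have h1 := Fintype.linearIndependent_iff.mp indep_r _ h0 t
    have h2 : μ t * (lam ((t : ℕ) + 1) - lam i) = 0 := by linear_combination h1
    rcases mul_eq_zero.mp h2 with h | h
    · exact absurd h hμt
    · exact sub_eq_zero.mp h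
  by_contra hne
  -- the partition of the index set according to the eigenvalue
  set g : (Fin m × Fin n) ⊕ Fin r → ℂ :=
    Sum.elim (fun q : Fin m × Fin n => lam ((q.1 : ℕ) + 1)) (fun t : Fin r => lam ((t : ℕ) + 1))
    with hg
  set SA : Set ((Fin m × Fin n) ⊕ Fin r) := {q | g q = lam s} with hSA
  -- membership of the central vectors in the corresponding spans
  have heinA : ∀ i, 1 ≤ i → i ≤ m → lam i = lam s →
      Q.e i n ∈ Submodule.span ℂ (F '' SA) := by
    intro i hi1 him hlami
    obtain ⟨μ, hμ, hprop⟩ := hmu i hi1 him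
    rw [← hμ]
    refine Submodule.sum_mem _ fun t _ => ?_
    by_cases h : μ t = 0
    · rw [h, zero_smul]; exact Submodule.zero_mem _
    · refine Submodule.smul_mem _ _ (Submodule.subset_span ⟨Sum.inr t, ?_, rfl⟩)
      show g (Sum.inr t) = lam s
      exact (hprop t h).trans hlami
  have heinB : ∀ i, 1 ≤ i → i ≤ m → lam i ≠ lam s →
      Q.e i n ∈ Submodule.span ℂ (F '' SAᶜ) := by
    intro i hi1 him hlami
    obtain ⟨μ, hμ, hprop⟩ := hmu i hi1 him
    rw [← hμ]
    refine Submodule.sum_mem _ fun t _ => ?_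
    by_cases h : μ t = 0
    · rw [h, zero_smul]; exact Submodule.zero_mem _
    · refine Submodule.smul_mem _ _ (Submodule.subset_span ⟨Sum.inr t, ?_, rfl⟩)
      show ¬ g (Sum.inr t) = lam s
      rw [show g (Sum.inr t) = lam ((t : ℕ) + 1) from rfl, hprop t h]
      exact hlami
  -- spans of such index sets are Lie ideals
  have hclosure : ∀ S : Set ((Fin m × Fin n) ⊕ Fin r),
      (∀ (i : Fin m) (j j' : Fin n), Sum.inl (i, j) ∈ S → Sum.inl (i, j') ∈ S) →
      (∀ (i : Fin m) (j : Fin n), Sum.inl (i, j) ∈ S →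
        Q.e ((i : ℕ) + 1) n ∈ Submodule.span ℂ (F '' S)) →
      ∀ (x y : N), y ∈ Submodule.span ℂ (F '' S) → ⁅x, y⁆ ∈ Submodule.span ℂ (F '' S) := by
    intro S hcol hcross x y hy
    have hx : x ∈ Submodule.span ℂ (Set.range F) := by rw [hspan]; exact Submodule.mem_top
    induction hx using Submodule.span_induction with
    | zero => rw [zero_lie]; exact Submodule.zero_mem _
    | add x z _ _ ihx ihz => rw [add_lie]; exact Submodule.add_mem _ ihx ihz
    | smul t x _ ihx => rw [smul_lie]; exact Submodule.smul_mem _ t ihx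
    | mem x hxr =>
      obtain ⟨idx, rfl⟩ := hxr
      induction hy using Submodule.span_induction with
      | zero => rw [lie_zero]; exact Submodule.zero_mem _
      | add y z _ _ ihy ihz => rw [lie_add]; exact Submodule.add_mem _ ihy ihz
      | smul t y _ ihy => rw [lie_smul]; exact Submodule.smul_mem _ t ihy
      | mem y hyS =>
        obtain ⟨idx', hidxS, rfl⟩ := hyS
        cases idx' with
        | inr t' =>
          rw [show F (Sum.inr t') = Q.e ((t' : ℕ) + 1) n from rfl,
            hcent ((t' : ℕ) + 1) (by omega) (by have := t'.isLt; omega) _]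
          exact Submodule.zero_mem _
        | inl q' =>
          obtain ⟨i, j⟩ := q'
          have hiv := i.isLt
          have hjv := j.isLt
          cases idx with
          | inr t =>
            rw [show F (Sum.inr t) = Q.e ((t : ℕ) + 1) n from rfl,
              hcent' ((t : ℕ) + 1) (by omega) (by have := t.isLt; omega) _]
            exact Submodule.zero_mem _
          | inl q =>
            obtain ⟨a0, b0⟩ := q
            have hav := a0.isLt
            have hbv := b0.isLt
            show ⁅Q.e ((a0 : ℕ) + 1) (b0 : ℕ), Q.e ((i : ℕ) + 1) (j : ℕ)⁆
              ∈ Submodule.span ℂ (F '' S)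
            by_cases hai : (a0 : ℕ) + 1 = (i : ℕ) + 1
            · rw [hai]
              rcases Nat.eq_zero_or_pos (b0 : ℕ) with hb0 | hb0
              · rw [hb0]
                rcases Nat.eq_zero_or_pos (j : ℕ) with hj0 | hj0
                · rw [hj0, lie_self]; exact Submodule.zero_mem _
                · by_cases hj2 : (j : ℕ) ≤ n - 2
                  · rw [Q.bracket_e0 ((i : ℕ) + 1) (j : ℕ) (by omega) (by omega) hj0 hj2]
                    exact Submodule.subset_span
                      ⟨Sum.inl (i, ⟨(j : ℕ) + 1, by omega⟩), hcol i j _ hidxS, rfl⟩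
                  · rw [show (j : ℕ) = n - 1 from by omega,
                      Q.bracket_e0_top ((i : ℕ) + 1) (by omega) (by omega)]
                    exact Submodule.zero_mem _
              · rcases Nat.eq_zero_or_pos (j : ℕ) with hj0 | hj0
                · rw [hj0, show ⁅Q.e ((i : ℕ) + 1) (b0 : ℕ), Q.e ((i : ℕ) + 1) 0⁆
                      = -⁅Q.e ((i : ℕ) + 1) 0, Q.e ((i : ℕ) + 1) (b0 : ℕ)⁆ from by
                    rw [← lie_skew]]
                  by_cases hb2 : (b0 : ℕ) ≤ n - 2
                  · rw [Q.bracket_e0 ((i : ℕ) + 1) (b0 : ℕ) (by omega) (by omega) hb0 hb2]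
                    exact Submodule.neg_mem _ (Submodule.subset_span
                      ⟨Sum.inl (i, ⟨(b0 : ℕ) + 1, by omega⟩), hcol i j _ hidxS, rfl⟩)
                  · rw [show (b0 : ℕ) = n - 1 from by omega,
                      Q.bracket_e0_top ((i : ℕ) + 1) (by omega) (by omega), neg_zero]
                    exact Submodule.zero_mem _
                · by_cases hbj : (b0 : ℕ) + (j : ℕ) = n
                  · rw [show (j : ℕ) = n - (b0 : ℕ) from by omega,
                      Q.bracket_pair ((i : ℕ) + 1) (b0 : ℕ) (by omega) (by omega) hb0 (by omega)]
                    exact Submodule.smul_mem _ _ (hcross i j hidxS)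
                  · rw [Q.bracket_zero ((i : ℕ) + 1) (b0 : ℕ) (j : ℕ) (by omega) (by omega)
                      hb0 (by omega) hj0 (by omega) hbj]
                    exact Submodule.zero_mem _
            · rw [Q.bracket_comm ((a0 : ℕ) + 1) ((i : ℕ) + 1) (b0 : ℕ) (j : ℕ) (by omega)
                (by omega) (by omega) (by omega) hai (by omega) (by omega)]
              exact Submodule.zero_mem _
  -- the two ideals
  have hcolA : ∀ (i : Fin m) (j j' : Fin n), Sum.inl (i, j) ∈ SA → Sum.inl (i, j') ∈ SA :=
    fun i j j' h => h
  have hcolB : ∀ (i : Fin m) (j j' : Fin n), Sum.inl (i, j) ∈ SAᶜ → Sum.inl (i, j') ∈ SAᶜ :=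
    fun i j j' h => h
  have hcrossA : ∀ (i : Fin m) (j : Fin n), Sum.inl (i, j) ∈ SA →
      Q.e ((i : ℕ) + 1) n ∈ Submodule.span ℂ (F '' SA) := by
    intro i j h
    exact heinA ((i : ℕ) + 1) (by omega) (by have := i.isLt; omega) h
  have hcrossB : ∀ (i : Fin m) (j : Fin n), Sum.inl (i, j) ∈ SAᶜ →
      Q.e ((i : ℕ) + 1) n ∈ Submodule.span ℂ (F '' SAᶜ) := by
    intro i j h
    exact heinB ((i : ℕ) + 1) (by omega) (by have := i.isLt; omega) h
  let I : LieIdeal ℂ N :=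
    { toSubmodule := Submodule.span ℂ (F '' SA)
      lie_mem := fun {x y} hy => hclosure SA hcolA hcrossA x y hy }
  let J : LieIdeal ℂ N :=
    { toSubmodule := Submodule.span ℂ (F '' SAᶜ)
      lie_mem := fun {x y} hy => hclosure SAᶜ hcolB hcrossB x y hy }
  have hInot : I ≠ ⊥ := by
    intro hbot
    rw [LieSubmodule.eq_bot_iff] at hbot
    have hmem : Q.e s 0 ∈ I := by
      refine Submodule.subset_span ⟨Sum.inl (⟨s - 1, by omega⟩, ⟨0, by omega⟩), ?_, ?_⟩
      · show lam ((s - 1) + 1) = lam s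
        rw [show (s - 1) + 1 = s from by omega]
      · show Q.e ((s - 1) + 1) 0 = Q.e s 0
        rw [show (s - 1) + 1 = s from by omega]
    have hne0 : Q.e s 0 ≠ 0 := by
      have h := Q.basis_indep.ne_zero (Sum.inl (⟨s - 1, by omega⟩, ⟨0, by omega⟩))
      rw [show ((Sum.elim (fun p : Fin m × Fin n => Q.e ((p.1 : ℕ) + 1) (p.2 : ℕ))
        (fun t : Fin r => Q.e ((t : ℕ) + 1) n))
          (Sum.inl (⟨s - 1, by omega⟩, ⟨0, by omega⟩)) : N) = Q.e ((s - 1) + 1) 0 from rfl,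
        show (s - 1) + 1 = s from by omega] at h
      exact h
    exact hne0 (hbot _ hmem)
  have hJnot : J ≠ ⊥ := by
    intro hbot
    rw [LieSubmodule.eq_bot_iff] at hbot
    have hmem : Q.e p 0 ∈ J := by
      refine Submodule.subset_span ⟨Sum.inl (⟨p - 1, by omega⟩, ⟨0, by omega⟩), ?_, ?_⟩
      · show ¬ lam ((p - 1) + 1) = lam s
        rw [show (p - 1) + 1 = p from by omega]
        exact fun h => hne h.symm
      · show Q.e ((p - 1) + 1) 0 = Q.e p 0
        rw [show (p - 1) + 1 = p from by omega]
    have hne0 : Q.e p 0 ≠ 0 := by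
      have h := Q.basis_indep.ne_zero (Sum.inl (⟨p - 1, by omega⟩, ⟨0, by omega⟩))
      rw [show ((Sum.elim (fun q : Fin m × Fin n => Q.e ((q.1 : ℕ) + 1) (q.2 : ℕ))
        (fun t : Fin r => Q.e ((t : ℕ) + 1) n))
          (Sum.inl (⟨p - 1, by omega⟩, ⟨0, by omega⟩)) : N) = Q.e ((p - 1) + 1) 0 from rfl,
        show (p - 1) + 1 = p from by omega] at h
      exact h
    exact hne0 (hbot _ hmem)
  have hinf : I ⊓ J = ⊥ := by
    apply (LieSubmodule.toSubmodule_eq_bot _).mp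
    rw [LieSubmodule.inf_toSubmodule]
    have hdisj : Disjoint (Submodule.span ℂ (F '' SA)) (Submodule.span ℂ (F '' SAᶜ)) :=
      Q.basis_indep.disjoint_span_image disjoint_compl_right
    exact disjoint_iff.mp hdisj
  have hsup : I ⊔ J = ⊤ := by
    apply (LieSubmodule.toSubmodule_eq_top _).mp
    rw [LieSubmodule.sup_toSubmodule]
    show Submodule.span ℂ (F '' SA) ⊔ Submodule.span ℂ (F '' SAᶜ) = ⊤
    rw [← Submodule.span_union, ← Set.image_union, Set.union_compl_self, Set.image_univ, hspan]
  exact hind ⟨I, J, hInot, hJnot, hinf, hsup⟩
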